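/- Let G be a group, g ∈ G an element of infinite order, and N ∈ ℕ. Then for every p ∈ Δ^(N)(G), the ℓ¹ distance between g·p and p satisfies d(g·p, p) ≥ 2/((N+1)² + 1). In particular, the infimum over p ∈ Δ^(N)(G) of d(g·p, p) is strictly positive. -/

import Mathlib

open scoped Pointwise ENNReal
open Filter Topology

noncomputable section

namespace FJ

/-- The set of left cosets of members of a family `F` of subgroups of `G`. -/
def cosets {G : Type} [Group G] (F : Set (Subgroup G)) : Set (Set G) :=
  {A | ∃ (g : G) (H : Subgroup G), H ∈ F ∧ A = g • (H : Set G)}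

/-- Left translation by `g` as a bijection of the set of cosets. -/
def cosetEquiv {G : Type} [Group G] (F : Set (Subgroup G)) (g : G) :
    ↥(cosets F) ≃ ↥(cosets F) where
  toFun A := ⟨g • (A : Set G), by
    obtain ⟨h, H, hH, hA⟩ := A.2
    exact ⟨g * h, H, hH, by rw [hA, smul_smul]⟩⟩
  invFun A := ⟨g⁻¹ • (A : Set G), by
    obtain ⟨h, H, hH, hA⟩ := A.2
    exact ⟨g⁻¹ * h, H, hH, by rw [hA, smul_smul]⟩⟩
  left_inv A := Subtype.ext (inv_smul_smul g (A : Set G))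
  right_inv A := Subtype.ext (smul_inv_smul g (A : Set G))

/-- Reindexing an `ℓ¹`-function along a bijection of the index set. -/
def lpT {ι : Type} (e : ι ≃ ι) (p : lp (fun _ : ι => ℝ) 1) : lp (fun _ : ι => ℝ) 1 :=
  ⟨fun i => p (e i), by
    have h1 : Summable fun i : ι => ‖p i‖ ^ ((1 : ℝ≥0∞).toReal) :=
      (lp.memℓp p).summable (by norm_num)
    exact memℓp_gen (e.summable_iff.2 h1)⟩

@[simp] theorem lpT_apply {ι : Type} (e : ι ≃ ι) (p : lp (fun _ : ι => ℝ) 1) (i : ι) :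
    lpT e p i = p (e i) := rfl

/-- The `N`-skeleton of the full simplex on the index set `ι`, inside `ℓ¹(ι)`:
finitely supported probability measures whose support has at most `N + 1` points. -/
def stdSimplex (ι : Type) (N : ℕ) : Set (lp (fun _ : ι => ℝ) 1) :=
  {p | (∀ i, 0 ≤ p i) ∧ {i | p i ≠ 0}.Finite ∧ {i | p i ≠ 0}.ncard ≤ N + 1 ∧ ∑' i, p i = 1}

/-- Reindexing preserves the simplex. -/
def simT {ι : Type} {N : ℕ} (e : ι ≃ ι) (q : ↥(stdSimplex ι N)) : ↥(stdSimplex ι N) := by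
  refine ⟨lpT e q.1, ?_, ?_, ?_, ?_⟩
  · exact fun i => q.2.1 (e i)
  · have : {i | (lpT e q.1) i ≠ 0} = e ⁻¹' {i | (q.1 : ∀ _ : ι, ℝ) i ≠ 0} := rfl
    rw [this]
    exact q.2.2.1.preimage e.injective.injOn
  · have h1 : {i | (lpT e q.1) i ≠ 0} = e.symm '' {i | (q.1 : ∀ _ : ι, ℝ) i ≠ 0} := by
      rw [Equiv.image_eq_preimage_symm]; rfl
    rw [h1, Set.ncard_image_of_injective _ e.symm.injective]
    exact q.2.2.2.1
  · have := q.2.2.2.2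
    calc ∑' i, (lpT e q.1) i = ∑' i, q.1 (e i) := rfl
    _ = ∑' i, q.1 i := e.tsum_eq _
    _ = 1 := this

/-- The isometric action of `G` on the simplex `Δ_F^{(N)}(G)`: `(g • p) A = p (g⁻¹ • A)`. -/
def simSMulF {G : Type} [Group G] (F : Set (Subgroup G)) (N : ℕ) (g : G) :
    ↥(stdSimplex ↥(cosets F) N) → ↥(stdSimplex ↥(cosets F) N) :=
  simT (cosetEquiv F g⁻¹)

/-- The isometric action of `G` on the simplex `Δ^{(N)}(G)` by left translation:
`(g • p) h = p (g⁻¹ * h)`. -/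
def simSMulG {G : Type} [Group G] (N : ℕ) (g : G) :
    ↥(stdSimplex G N) → ↥(stdSimplex G N) :=
  simT (Equiv.mulLeft g⁻¹)

end FJ

section AuxFJ

private lemma l1_norm_eq_tsum {ι : Type} (f : lp (fun _ : ι => ℝ) 1) :
    ‖f‖ = ∑' i, |f i| := by
  have h := lp.hasSum_norm (p := 1) (by norm_num) f
  simp only [ENNReal.toReal_one, Real.rpow_one, Real.norm_eq_abs] at h
  exact h.tsum_eq.symm

private lemma l1_summable {ι : Type} (f : lp (fun _ : ι => ℝ) 1) :
    Summable (fun i => |f i|) := by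
  have h := (lp.memℓp f).summable (p := 1) (by norm_num)
  simpa [Real.norm_eq_abs] using h

end AuxFJ

/-- If `g ∈ G` has infinite order, then for every point `p` of the `N`-skeleton
`Δ^{(N)}(G)` of the full simplex on `G`, the `ℓ¹` distance between `g • p` and `p` is
at least `2 / ((N+1)² + 1)`; in particular the infimum over `p` of these distances
is strictly positive. -/
theorem dist_smul_self_ge_of_infinite_order
    {G : Type} [Group G] (g : G) (hg : ∀ k : ℤ, g ^ k = 1 → k = 0) (N : ℕ) :
    (∀ p : ↥(FJ.stdSimplex G N),
        2 / (((N : ℝ) + 1) ^ 2 + 1) ≤ dist (FJ.simSMulG N g p) p) ∧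
      0 < ⨅ p : ↥(FJ.stdSimplex G N), dist (FJ.simSMulG N g p) p := by
  classical
  have hginj : Function.Injective fun k : ℕ => g ^ k := by
    intro a b hab
    simp only at hab
    have hab' : g ^ (a : ℤ) = g ^ (b : ℤ) := by
      rw [zpow_natCast, zpow_natCast]; exact hab
    have h1 : g ^ ((a : ℤ) - (b : ℤ)) = 1 := by
      rw [zpow_sub, hab', mul_inv_cancel]
    have := hg _ h1
    omega
  -- pointwise bound by 1/(N+1)
  have key : ∀ p : ↥(FJ.stdSimplex G N),
      (1 : ℝ) / ((N : ℝ) + 1) ≤ dist (FJ.simSMulG N g p) p := by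
    rintro ⟨p, hpos, hfin, hcard, hsum⟩
    set pp : ↥(FJ.stdSimplex G N) := ⟨p, hpos, hfin, hcard, hsum⟩ with hpp
    set q : ↥(FJ.stdSimplex G N) := FJ.simSMulG N g pp with hq
    have hqval : ∀ h : G, (q : lp (fun _ : G => ℝ) 1) h = p (g⁻¹ * h) := fun h => rfl
    have hdist : dist q pp = ∑' h, |p (g⁻¹ * h) - p h| := by
      rw [Subtype.dist_eq, dist_eq_norm, l1_norm_eq_tsum]
      exact tsum_congr fun h => by
        rw [lp.coeFn_sub, Pi.sub_apply, hqval h]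
    have hsummable : Summable (fun h : G => |p (g⁻¹ * h) - p h|) := by
      have h2 := l1_summable ((q : lp (fun _ : G => ℝ) 1) - p)
      have h3 : (fun h : G => |((q : lp (fun _ : G => ℝ) 1) - p) h|)
          = fun h : G => |p (g⁻¹ * h) - p h| := by
        funext h
        rw [lp.coeFn_sub, Pi.sub_apply, hqval h]
      rwa [h3] at h2
    set s : Finset G := hfin.toFinset with hs
    have hsmem : ∀ h : G, h ∈ s ↔ p h ≠ 0 := fun h => hfin.mem_toFinset
    have hsum_s : ∑ h ∈ s, p h = 1 := by
      rw [← hsum]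
      exact (tsum_eq_sum (fun h hh => by
        by_contra hne
        exact hh ((hsmem h).2 hne))).symm
    have hs_card : s.card ≤ N + 1 := by
      rw [hs]
      have h4 := Set.ncard_eq_toFinset_card _ hfin
      omega
    have hs_ne : s.Nonempty := by
      rcases Finset.eq_empty_or_nonempty s with h | h
      · rw [h, Finset.sum_empty] at hsum_s; norm_num at hsum_s
      · exact h
    obtain ⟨a, haS, hamax⟩ := Finset.exists_max_image s (fun h => p h) hs_ne
    have hN1 : (0 : ℝ) < (N : ℝ) + 1 := by positivity
    have hMa : 1 ≤ ((N : ℝ) + 1) * p a := by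
      have h2 : ∑ h ∈ s, p h ≤ s.card • p a :=
        Finset.sum_le_card_nsmul s _ _ (fun h hh => hamax h hh)
      rw [hsum_s, nsmul_eq_mul] at h2
      have hpa : 0 ≤ p a := hpos a
      have hc : (s.card : ℝ) ≤ (N : ℝ) + 1 := by exact_mod_cast hs_card
      nlinarith
    have hex : ∃ k : ℕ, p (g ^ k * a) = 0 := by
      by_contra hcon
      push_neg at hcon
      have hinj : Function.Injective (fun j : Fin (N + 2) => g ^ (j : ℕ) * a) := by
        intro i j hij
        simp only [mul_left_inj] at hij
        exact Fin.ext (hginj hij)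
      have hsub : (Finset.univ.image (fun j : Fin (N + 2) => g ^ (j : ℕ) * a)) ⊆ s := by
        intro x hx
        simp only [Finset.mem_image] at hx
        obtain ⟨j, _, rfl⟩ := hx
        exact (hsmem _).2 (hcon j)
      have h5 := Finset.card_le_card hsub
      rw [Finset.card_image_of_injective _ hinj, Finset.card_univ, Fintype.card_fin] at h5
      omega
    obtain ⟨k, hk⟩ := hex
    have hDge : p a ≤ ∑' h, |p (g⁻¹ * h) - p h| := by
      calc p a = p (g ^ 0 * a) - p (g ^ k * a) := by
            rw [hk, pow_zero, one_mul, sub_zero]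
        _ = ∑ j ∈ Finset.range k, (p (g ^ j * a) - p (g ^ (j + 1) * a)) :=
            (Finset.sum_range_sub' (fun j => p (g ^ j * a)) k).symm
        _ ≤ ∑ j ∈ Finset.range k, |p (g⁻¹ * (g ^ (j + 1) * a)) - p (g ^ (j + 1) * a)| := by
            refine Finset.sum_le_sum fun j _ => ?_
            have he : g⁻¹ * (g ^ (j + 1) * a) = g ^ j * a := by
              rw [← mul_assoc]
              congr 1
              rw [pow_succ']
              group
            rw [he]
            exact le_abs_self _
        _ = ∑ h ∈ (Finset.range k).image (fun j => g ^ (j + 1) * a),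
              |p (g⁻¹ * h) - p h| := by
            rw [Finset.sum_image]
            intro i _ j _ hij
            have := hginj (mul_right_cancel hij)
            omega
        _ ≤ ∑' h, |p (g⁻¹ * h) - p h| :=
            Summable.sum_le_tsum _ (fun _ _ => abs_nonneg _) hsummable
    have h3 : (1 : ℝ) / ((N : ℝ) + 1) ≤ p a := by
      rw [div_le_iff₀ hN1]
      nlinarith
    rw [hdist]
    exact h3.trans hDge
  have hcmp : 2 / (((N : ℝ) + 1) ^ 2 + 1) ≤ 1 / ((N : ℝ) + 1) := by
    rw [div_le_div_iff₀ (by positivity) (by positivity)]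
    nlinarith [sq_nonneg ((N : ℝ))]
  have hall : ∀ p : ↥(FJ.stdSimplex G N),
      2 / (((N : ℝ) + 1) ^ 2 + 1) ≤ dist (FJ.simSMulG N g p) p :=
    fun p => hcmp.trans (key p)
  refine ⟨hall, ?_⟩
  -- the simplex is nonempty: the point mass at 1
  have hmem1 : Memℓp (fun h : G => if h = (1 : G) then (1 : ℝ) else 0) 1 := by
    apply memℓp_gen
    apply summable_of_ne_finset_zero (s := {(1 : G)})
    intro h hh
    simp only [Finset.mem_singleton] at hh
    simp [hh]
  set δ : lp (fun _ : G => ℝ) 1 := ⟨fun h => if h = (1 : G) then (1 : ℝ) else 0, hmem1⟩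
    with hδ
  have hδapp : ∀ h : G, δ h = if h = (1 : G) then (1 : ℝ) else 0 := fun _ => rfl
  have hδset : {i : G | δ i ≠ 0} = {(1 : G)} := by
    ext i
    rw [Set.mem_setOf_eq, hδapp]
    by_cases h : i = 1 <;> simp [h]
  have hne : Nonempty ↥(FJ.stdSimplex G N) := by
    refine ⟨⟨δ, ?_, ?_, ?_, ?_⟩⟩
    · intro i
      rw [hδapp]
      split <;> norm_num
    · rw [hδset]; exact Set.finite_singleton _
    · rw [hδset, Set.ncard_singleton]; omega
    · have h6 : ∑' h, δ h = δ 1 :=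
        tsum_eq_single 1 (fun b hb => by rw [hδapp]; simp [hb])
      rw [h6, hδapp]; simp
  calc (0 : ℝ) < 2 / (((N : ℝ) + 1) ^ 2 + 1) := by positivity
    _ ≤ ⨅ p : ↥(FJ.stdSimplex G N), dist (FJ.simSMulG N g p) p := le_ciInf hall
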